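/- Let $d$ be the signed distance function to the circle of radius $r_0$ in $\mathbb{R}^2$, and let $\delta_\epsilon$ be an integrable kernel supported in $[-\epsilon,\epsilon]$ with $0 < \epsilon < r_0$, $\int \delta_\epsilon = 1$, and $\int \eta\, \delta_\epsilon(\eta)\, d\eta = 0$. Then $\int_{\mathbb{R}^2} \delta_\epsilon(d(\mathbf{x}))\, d\mathbf{x} = 2\pi r_0$, the exact circumference of the circle. -/

import Mathlib

open MeasureTheory Set

private lemma mom_integrable {ε : ℝ} (hε : 0 < ε) {δ : ℝ → ℝ}
    (hint : MeasureTheory.Integrable δ)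
    (hsupp : Function.support δ ⊆ Set.Icc (-ε) ε) :
    MeasureTheory.Integrable (fun η => η * δ η) := by
  refine (hint.norm.const_mul ε).mono'
    (aestronglyMeasurable_id.mul hint.aestronglyMeasurable)
    (Filter.Eventually.of_forall fun η => ?_)
  by_cases h : δ η = 0
  · simp [h, mul_nonneg hε.le (abs_nonneg _)]
  · have := hsupp h
    simp only [mem_Icc] at this
    have hb : |η| ≤ ε := abs_le.mpr this
    calc ‖η * δ η‖ = |η| * ‖δ η‖ := by rw [norm_mul]; rfl
      _ ≤ ε * ‖δ η‖ := by gcongr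

/-- For the signed distance function `d(x) = ‖x‖ - r₀` to the circle of radius `r₀` in
`ℝ²` and a kernel `δε` supported in `[-ε,ε] ⊂ (-r₀,r₀)` with unit mass and vanishing
first moment, `∫_{ℝ²} δε(d(x)) dx = 2π r₀`. -/
theorem circle_integral_exact (r₀ ε : ℝ) (hr : 0 < r₀) (hε : 0 < ε) (hεr : ε < r₀)
    (δ : ℝ → ℝ) (hint : MeasureTheory.Integrable δ)
    (hsupp : Function.support δ ⊆ Set.Icc (-ε) ε)
    (hmass : ∫ η : ℝ, δ η = 1)
    (hmom : ∫ η : ℝ, η * δ η = 0) :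
    ∫ x : EuclideanSpace ℝ (Fin 2), δ (‖x‖ - r₀) = 2 * Real.pi * r₀ := by
  have hdim : Module.finrank ℝ (EuclideanSpace ℝ (Fin 2)) = 2 := by simp
  have key := MeasureTheory.integral_fun_norm_addHaar
    (volume : Measure (EuclideanSpace ℝ (Fin 2))) (fun y => δ (y - r₀))
  rw [key, hdim]
  have hball : (volume (Metric.ball (0 : EuclideanSpace ℝ (Fin 2)) 1)).toReal = Real.pi := by
    rw [EuclideanSpace.volume_ball]
    have h2 : ((1:ℝ) + 1) = 2 := by norm_num
    simp [h2, Real.Gamma_two, Real.sq_sqrt Real.pi_pos.le,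
      ENNReal.toReal_ofReal Real.pi_pos.le]
  rw [measureReal_def, hball]
  -- reduce to the 1D integral
  have hIoi : ∫ y in Ioi (0:ℝ), y ^ (2 - 1) • δ (y - r₀) = ∫ y : ℝ, y * δ (y - r₀) := by
    norm_num only
    simp only [pow_one, smul_eq_mul]
    refine setIntegral_eq_integral_of_forall_compl_eq_zero (f := fun y => y * δ (y - r₀))
      fun y hy => ?_
    simp only [mem_Ioi, not_lt] at hy
    have : δ (y - r₀) = 0 := by
      by_contra h
      have := hsupp h
      simp only [mem_Icc] at this
      linarith
    simp [this]
  have hshift : ∫ y : ℝ, y * δ (y - r₀) = ∫ η : ℝ, (η + r₀) * δ η := by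
    have := MeasureTheory.integral_sub_right_eq_self (μ := volume)
      (fun η => (η + r₀) * δ η) r₀
    simp only [sub_add_cancel] at this
    exact this
  have hsplit : ∫ η : ℝ, (η + r₀) * δ η = r₀ := by
    have h1 : (fun η => (η + r₀) * δ η) = fun η => η * δ η + r₀ * δ η := by
      ext η; ring
    rw [h1, integral_add (mom_integrable hε hint hsupp) (hint.const_mul r₀),
      hmom, integral_const_mul, hmass]
    ring
  rw [hIoi, hshift, hsplit]
  simp only [smul_eq_mul, nsmul_eq_mul]
  push_cast
  ring
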